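/- Let T be a homogeneous tree and let F ⊆ T with |F| = k ≥ 3. Then F is a free subset of T if and only if there is an enumeration {t₁,…,t_k} of F such that ℓ(t₁) < ⋯ < ℓ(t_{k−1}) ≤ ℓ(t_k) and for every m ∈ {1,…,k−2}, ℓ(t_m) < ℓ(∧{t_{m+1},…,t_k}). -/

import Mathlib

/-- Strict prefix relation on lists: the tree order on `b^{<ℕ}`. -/
def PLt {β : Type*} (s t : List β) : Prop := s <+: t ∧ s ≠ t

/-- The level of a node `t` in the tree `T ⊆ b^{<ℕ}`: the number of its strict
predecessors (strict prefixes) lying in `T`. -/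
noncomputable def lvl {β : Type*} (T : Set (List β)) (t : List β) : ℕ :=
  {s ∈ T | PLt s t}.ncard

/-- `t` is an immediate successor of `s` in the tree `T`. -/
def ImmSuc {β : Type*} (T : Set (List β)) (s t : List β) : Prop :=
  s ∈ T ∧ t ∈ T ∧ PLt s t ∧ ¬∃ u ∈ T, PLt s u ∧ PLt u t

/-- `T` is uniquely rooted: it has a node below all of its nodes. -/
def UniquelyRooted {β : Type*} (T : Set (List β)) : Prop :=
  ∃ r ∈ T, ∀ t ∈ T, r <+: t

/-- `C` is a maximal chain of the tree `T`. -/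
def MaxChainIn {β : Type*} (T C : Set (List β)) : Prop :=
  C ⊆ T ∧ (∀ s ∈ C, ∀ t ∈ C, s <+: t ∨ t <+: s) ∧
    ∀ C', C ⊆ C' → C' ⊆ T → (∀ s ∈ C', ∀ t ∈ C', s <+: t ∨ t <+: s) → C' = C

/-- `T` is balanced with all maximal chains of cardinality `h`
(i.e. balanced and of height `h`). -/
def BalancedOfHeight {β : Type*} (T : Set (List β)) (h : ℕ) : Prop :=
  ∀ C, MaxChainIn T C → C.Finite ∧ C.ncard = h

/-- Every level of `S` is a subset of some level of `T`. -/
def LevelsAligned {β : Type*} (T S : Set (List β)) : Prop :=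
  ∀ s ∈ S, ∀ s' ∈ S, lvl S s = lvl S s' → lvl T s = lvl T s'

/-- For every non-maximal node `s` of `S` and every immediate successor `t` of `s`
in `T` there is a unique immediate successor `s'` of `s` in `S` with `t ≤ s'`. -/
def SuccCond {β : Type*} (T S : Set (List β)) : Prop :=
  ∀ s ∈ S, (∃ x ∈ S, PLt s x) → ∀ t, ImmSuc T s t → ∃! s', ImmSuc S s s' ∧ t <+: s'

/-- `S` is a strong subtree of `T` of (finite) height `h`. -/
def IsStrongSubtreeFin {β : Type*} (T S : Set (List β)) (h : ℕ) : Prop :=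
  S ⊆ T ∧ S.Nonempty ∧ UniquelyRooted S ∧ BalancedOfHeight S h ∧
    LevelsAligned T S ∧ SuccCond T S

/-- `S` is a strong subtree of `T` of infinite height (uniquely rooted, balanced with
all maximal chains infinite, levels of `S` inside levels of `T`, successor condition). -/
def IsStrongSubtreeInf {β : Type*} (T S : Set (List β)) : Prop :=
  S ⊆ T ∧ S.Nonempty ∧ UniquelyRooted S ∧ (∀ s ∈ S, ∃ x ∈ S, PLt s x) ∧
    LevelsAligned T S ∧ SuccCond T S

/-- `r` is the root of `S`. -/
def IsRoot {β : Type*} (S : Set (List β)) (r : List β) : Prop :=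
  r ∈ S ∧ ∀ x ∈ S, r <+: x

/-- `v` is the immediate successor of `u` in `S` in direction `p`, i.e. the unique
immediate successor of `u` in `S` extending `u⌢p`. -/
def DirSucc {β : Type*} (S : Set (List β)) (u : List β) (p : β) (v : List β) : Prop :=
  ImmSuc S u v ∧ (u ++ [p]) <+: v

/-- `w` is the infimum (longest common initial segment) of the set `G` of nodes. -/
def IsInfList {β : Type*} (G : Set (List β)) (w : List β) : Prop :=
  (∀ t ∈ G, w <+: t) ∧ ∀ v, (∀ t ∈ G, v <+: t) → v <+: w

open Classical in
/-- The infimum (longest common initial segment) of a set of nodes. -/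
noncomputable def infNode {β : Type*} (G : Set (List β)) : List β :=
  if h : ∃ w, IsInfList G w then h.choose else []

/-- The families `Free_k(T)` of free subsets of `T`, defined recursively:
`Free₁(T)` consists of singletons, `Free₂(T)` of doubletons, and
`F ∈ Free_{k+1}(T)` iff `F = {t} ∪ G` with `G ∈ Free_k(T)`, `t ∈ T` and
`ℓ(t) < ℓ(∧G)`. -/
inductive FreeK {b : ℕ} (T : Set (List (Fin b))) : ℕ → Finset (List (Fin b)) → Prop
  | single (t : List (Fin b)) (ht : t ∈ T) : FreeK T 1 {t}
  | pair (s t : List (Fin b)) (hs : s ∈ T) (ht : t ∈ T) (hst : s ≠ t) :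
      FreeK T 2 {s, t}
  | step (k : ℕ) (hk : 2 ≤ k) (t : List (Fin b)) (ht : t ∈ T)
      (G : Finset (List (Fin b))) (hG : FreeK T k G)
      (hlen : t.length < (infNode (G : Set (List (Fin b)))).length) :
      FreeK T (k + 1) (insert t G)

/-- `F` is a free subset of `T`. -/
def IsFreeSet {b : ℕ} (T : Set (List (Fin b))) (F : Finset (List (Fin b))) : Prop :=
  ∃ k, FreeK T k F


lemma exists_isInfList {β : Type*} {G : Set (List β)} (hG : G.Nonempty) :
    ∃ w, IsInfList G w := by
  classical
  obtain ⟨t₀, ht₀⟩ := hG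
  set P : ℕ → Prop := fun m => ∀ t ∈ G, t₀.take m <+: t with hP
  have hP0 : P 0 := by intro t ht; simp
  set n := Nat.findGreatest P t₀.length with hn
  have hPn : P n := Nat.findGreatest_spec (Nat.zero_le _) hP0
  refine ⟨t₀.take n, hPn, ?_⟩
  intro v hv
  have hvt₀ : v <+: t₀ := hv t₀ ht₀
  have hvlen : v.length ≤ t₀.length := hvt₀.length_le
  have hveq : v = t₀.take v.length := List.prefix_iff_eq_take.mp hvt₀
  have hPv : P v.length := by intro t ht; rw [← hveq]; exact hv t ht
  have hle : v.length ≤ n := Nat.le_findGreatest hvlen hPv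
  rw [hveq]
  exact List.take_prefix_take_left hle

lemma isInfList_infNode {β : Type*} {G : Set (List β)} (hG : G.Nonempty) :
    IsInfList G (infNode G) := by
  have h := exists_isInfList hG
  rw [infNode, dif_pos h]
  exact h.choose_spec

lemma freeK_card {b : ℕ} {T : Set (List (Fin b))} {n : ℕ} {F : Finset (List (Fin b))}
    (h : FreeK T n F) : F.card = n := by
  induction h with
  | single t ht => simp
  | pair s t hs ht hst =>
    rw [Finset.card_insert_of_notMem (by simp [hst]), Finset.card_singleton]
  | step k hk t ht G hG hlen ih =>
    have hGne : (↑G : Set (List (Fin b))).Nonempty := by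
      rw [Finset.coe_nonempty]
      exact Finset.card_pos.mp (by omega)
    have htG : t ∉ G := fun htG =>
      absurd hlen (not_lt.mpr ((isInfList_infNode hGne).1 t htG).length_le)
    rw [Finset.card_insert_of_notMem htG, ih]

lemma freeK_lt_length {b : ℕ} {G : Finset (List (Fin b))}
    (hGne : (↑G : Set (List (Fin b))).Nonempty)
    {t : List (Fin b)} (hlen : t.length < (infNode (G : Set (List (Fin b)))).length)
    {g : List (Fin b)} (hg : g ∈ G) : t.length < g.length :=
  lt_of_lt_of_le hlen ((isInfList_infNode hGne).1 g hg).length_le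

lemma freeK_enum {b : ℕ} {T : Set (List (Fin b))} {n : ℕ} {F : Finset (List (Fin b))}
    (hF : FreeK T n F) (hn : 2 ≤ n) :
    ∃ t : ℕ → List (Fin b),
        (∀ i, 1 ≤ i → i ≤ n → t i ∈ F) ∧
        (↑F : Set (List (Fin b))) ⊆ t '' Set.Icc 1 n ∧
        Set.InjOn t (Set.Icc 1 n) ∧
        (∀ i j, 1 ≤ i → i < j → j ≤ n - 1 → (t i).length < (t j).length) ∧
        (t (n - 1)).length ≤ (t n).length ∧
        (∀ m, 1 ≤ m → m ≤ n - 2 →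
          (t m).length < (infNode (t '' Set.Icc (m + 1) n)).length) := by
  induction hF with
  | single t ht => omega
  | pair s t hs ht hst =>
    obtain ⟨a, c, hac, hne, hlen⟩ :
        ∃ a c : List (Fin b), ({s, t} : Finset (List (Fin b))) = {a, c} ∧ a ≠ c ∧
          a.length ≤ c.length := by
      rcases le_total s.length t.length with h | h
      · exact ⟨s, t, rfl, hst, h⟩
      · exact ⟨t, s, by ext x; simp; tauto, hst.symm, h⟩
    refine ⟨fun i => if i = 1 then a else c, ?_, ?_, ?_, ?_, ?_, ?_⟩
    · intro i h1 h2
      rw [hac]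
      by_cases h : i = 1 <;> simp [h]
    · intro x hx
      rw [hac] at hx
      simp only [Finset.coe_insert, Finset.coe_singleton, Set.mem_insert_iff,
        Set.mem_singleton_iff] at hx
      rcases hx with rfl | rfl
      · exact ⟨1, by simp, by simp⟩
      · exact ⟨2, by simp, by simp⟩
    · intro i hi j hj h
      simp only [Set.mem_Icc] at hi hj
      have hi' : i = 1 ∨ i = 2 := by omega
      have hj' : j = 1 ∨ j = 2 := by omega
      rcases hi' with rfl | rfl <;> rcases hj' with rfl | rfl <;> simp at h ⊢ <;>
        first
          | exact absurd h hne
          | exact absurd h.symm hne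
    · intro i j h1 h2 h3; omega
    · simpa using hlen
    · intro m h1 h2; omega
  | step k hk t ht G hG hlen ih =>
    obtain ⟨s, hs1, hs2, hs3, hs4, hs5, hs6⟩ := ih hk
    have hGne : (↑G : Set (List (Fin b))).Nonempty :=
      ⟨s 1, hs1 1 le_rfl (by omega)⟩
    have htG : ∀ g ∈ G, t.length < g.length := fun g hg =>
      freeK_lt_length hGne hlen hg
    set f : ℕ → List (Fin b) := fun i => if i ≤ 1 then t else s (i - 1) with hf
    have himg : ∀ a c : ℕ, 2 ≤ a → f '' Set.Icc a c = s '' Set.Icc (a - 1) (c - 1) := by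
      intro a c ha
      ext x
      simp only [Set.mem_image, Set.mem_Icc]
      constructor
      · rintro ⟨i, ⟨hi1, hi2⟩, rfl⟩
        refine ⟨i - 1, ⟨by omega, by omega⟩, ?_⟩
        simp only [hf]; rw [if_neg (by omega)]
      · rintro ⟨j, ⟨hj1, hj2⟩, rfl⟩
        refine ⟨j + 1, ⟨by omega, by omega⟩, ?_⟩
        simp only [hf]; rw [if_neg (by omega)]; simp
    have hGimg : s '' Set.Icc 1 k = ↑G := by
      apply Set.Subset.antisymm
      · rintro x ⟨i, hi, rfl⟩
        simp only [Set.mem_Icc] at hi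
        exact hs1 i hi.1 hi.2
      · exact hs2
    refine ⟨f, ?_, ?_, ?_, ?_, ?_, ?_⟩
    · intro i h1 h2
      by_cases h : i ≤ 1
      · simp only [hf, if_pos h]; exact Finset.mem_insert_self _ _
      · simp only [hf, if_neg h]
        exact Finset.mem_insert_of_mem (hs1 (i - 1) (by omega) (by omega))
    · intro x hx
      simp only [Finset.coe_insert, Set.mem_insert_iff] at hx
      rcases hx with rfl | hx
      · refine ⟨1, ?_, by simp [hf]⟩
        simp only [Set.mem_Icc]; omega
      · obtain ⟨j, hj, rfl⟩ := hs2 hx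
        simp only [Set.mem_Icc] at hj
        refine ⟨j + 1, ?_, ?_⟩
        · simp only [Set.mem_Icc]; omega
        · simp only [hf]; rw [if_neg (by omega)]; simp
    · intro i hi j hj h
      simp only [Set.mem_Icc] at hi hj
      by_cases h1 : i ≤ 1 <;> by_cases h2 : j ≤ 1
      · omega
      · exfalso
        simp only [hf, if_pos h1, if_neg h2] at h
        have := htG (s (j - 1)) (hs1 (j - 1) (by omega) (by omega))
        rw [← h] at this; omega
      · exfalso
        simp only [hf, if_neg h1, if_pos h2] at h
        have := htG (s (i - 1)) (hs1 (i - 1) (by omega) (by omega))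
        rw [h] at this; omega
      · simp only [hf, if_neg h1, if_neg h2] at h
        have := hs3 (by simp only [Set.mem_Icc]; omega)
          (by simp only [Set.mem_Icc]; omega) h
        omega
    · intro i j h1 h2 h3
      by_cases hi1 : i ≤ 1
      · simp only [hf, if_pos hi1, if_neg (show ¬ j ≤ 1 by omega)]
        exact htG _ (hs1 (j - 1) (by omega) (by omega))
      · simp only [hf, if_neg hi1, if_neg (show ¬ j ≤ 1 by omega)]
        exact hs4 (i - 1) (j - 1) (by omega) (by omega) (by omega)
    · have e1 : k + 1 - 1 = k := by omega
      rw [e1]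
      simp only [hf, if_neg (show ¬ k ≤ 1 by omega), if_neg (show ¬ k + 1 ≤ 1 by omega)]
      have e2 : k + 1 - 1 = k := by omega
      rw [e2]
      exact hs5
    · intro m h1 h2
      by_cases hm : m = 1
      · subst hm
        have himgG : f '' Set.Icc (1 + 1) (k + 1) = ↑G := by
          rw [himg (1 + 1) (k + 1) le_rfl]
          have e : (1 + 1 - 1 : ℕ) = 1 := by omega
          have e' : (k + 1 - 1 : ℕ) = k := by omega
          rw [e, e', hGimg]
        rw [himgG]
        simpa [hf] using hlen
      · have e : f '' Set.Icc (m + 1) (k + 1) = s '' Set.Icc m k := by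
          rw [himg (m + 1) (k + 1) (by omega)]
          have e1 : (m + 1 - 1 : ℕ) = m := by omega
          have e2 : (k + 1 - 1 : ℕ) = k := by omega
          rw [e1, e2]
        rw [e]
        have h6 := hs6 (m - 1) (by omega) (by omega)
        have e2 : m - 1 + 1 = m := by omega
        rw [e2] at h6
        simp only [hf, if_neg (show ¬ m ≤ 1 by omega)] at h6 ⊢
        exact h6

theorem stmt14 (b k : ℕ) (hb : 2 ≤ b) (hk : 3 ≤ k)
    (T : Set (List (Fin b))) (hT : IsStrongSubtreeInf Set.univ T)
    (F : Finset (List (Fin b))) (hFT : ↑F ⊆ T) (hcard : F.card = k) :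
    IsFreeSet T F ↔
      ∃ t : ℕ → List (Fin b),
        (∀ i, 1 ≤ i → i ≤ k → t i ∈ F) ∧
        (↑F : Set (List (Fin b))) ⊆ t '' Set.Icc 1 k ∧
        Set.InjOn t (Set.Icc 1 k) ∧
        (∀ i j, 1 ≤ i → i < j → j ≤ k - 1 → (t i).length < (t j).length) ∧
        (t (k - 1)).length ≤ (t k).length ∧
        (∀ m, 1 ≤ m → m ≤ k - 2 →
          (t m).length < (infNode (t '' Set.Icc (m + 1) k)).length) := by
  constructor
  · rintro ⟨k', hF⟩
    have hk' : k' = k := by rw [← freeK_card hF, hcard]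
    subst hk'
    exact freeK_enum hF (by omega)
  · rintro ⟨t, h1, h2, h3, h4, h5, h6⟩
    have hmemT : ∀ i, 1 ≤ i → i ≤ k → t i ∈ T := fun i hi1 hi2 => hFT (h1 i hi1 hi2)
    have claim : ∀ d, d ≤ k - 2 →
        FreeK T (d + 2) (Finset.image t (Finset.Icc (k - 1 - d) k)) := by
      intro d
      induction d with
      | zero =>
        intro _
        have heq : Finset.image t (Finset.Icc (k - 1 - 0) k) = {t (k - 1), t k} := by
          have : Finset.Icc (k - 1 - 0) k = {k - 1, k} := by
            ext x; simp only [Finset.mem_Icc, Finset.mem_insert, Finset.mem_singleton]; omega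
          rw [this]
          simp
        rw [heq]
        refine FreeK.pair _ _ (hmemT (k - 1) (by omega) (by omega))
          (hmemT k (by omega) le_rfl) ?_
        intro h
        have := h3 (by simp only [Set.mem_Icc]; omega)
          (by simp only [Set.mem_Icc]; omega) h
        omega
      | succ d ihd =>
        intro hd
        have hprev := ihd (by omega)
        set m := k - 1 - (d + 1) with hm
        have hm1 : 1 ≤ m := by omega
        have hm2 : m ≤ k - 2 := by omega
        have hicc : Finset.Icc m k = insert m (Finset.Icc (m + 1) k) := by
          ext x
          simp only [Finset.mem_Icc, Finset.mem_insert]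
          omega
        have hiccprev : k - 1 - d = m + 1 := by omega
        rw [hiccprev] at hprev
        have hcoe : (↑(Finset.image t (Finset.Icc (m + 1) k)) : Set (List (Fin b)))
            = t '' Set.Icc (m + 1) k := by
          rw [Finset.coe_image, Finset.coe_Icc]
        have hstep := FreeK.step (d + 2) (by omega) (t m) (hmemT m hm1 (by omega))
          (Finset.image t (Finset.Icc (m + 1) k)) hprev
          (by rw [hcoe]; exact h6 m hm1 hm2)
        have himg : insert (t m) (Finset.image t (Finset.Icc (m + 1) k))
            = Finset.image t (Finset.Icc m k) := by
          rw [hicc, Finset.image_insert]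
        rw [himg] at hstep
        exact hstep
    have hfin := claim (k - 2) le_rfl
    have e1 : k - 2 + 2 = k := by omega
    have e2 : k - 1 - (k - 2) = 1 := by omega
    rw [e1, e2] at hfin
    have himgF : Finset.image t (Finset.Icc 1 k) = F := by
      apply Finset.coe_injective
      rw [Finset.coe_image, Finset.coe_Icc]
      apply Set.Subset.antisymm
      · rintro x ⟨i, hi, rfl⟩
        simp only [Set.mem_Icc] at hi
        exact h1 i hi.1 hi.2
      · exact h2
    rw [himgF] at hfin
    exact ⟨k, hfin⟩
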